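/- With C = ℂ and W = Map(ℂ,ℂ) ⋊ ℂ as above, the function (f,a) ↦ exp(a) on W, which equals ((exp,0)·X_0 − X_0), does not lie in the polynomial subring ℂ[{X_c : c ∈ ℂ}, Y] of functions on W; hence right translation by (exp, 0) does not preserve this ring. -/

import Mathlib

/-- The underlying set of `W = Map(ℂ, ℂ) ⋊ ℂ`. -/
abbrev WSet := (ℂ → ℂ) × ℂ

/-- The multiplication of `W`: `(f, a)(g, b) = (f + a·g, a + b)` with `(a·g)(x) = g(x + a)`. -/
def wmul (p q : WSet) : WSet := (p.1 + fun x => q.1 (x + p.2), p.2 + q.2)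

/-- The coordinate functions `X_c((f, a)) = f(c)`. -/
def Xc (c : ℂ) : WSet → ℂ := fun p => p.1 c

/-- The coordinate function `Y((f, a)) = a`. -/
def Yc : WSet → ℂ := fun p => p.2

/-- restriction along `a ↦ (0, a)` as an algebra hom. -/
def restr : (WSet → ℂ) →ₐ[ℂ] (ℂ → ℂ) where
  toFun φ := fun a => φ (0, a)
  map_one' := rfl
  map_mul' _ _ := rfl
  map_zero' := rfl
  map_add' _ _ := rfl
  commutes' _ := rfl

lemma exp_not_poly : Complex.exp ∉ Algebra.adjoin ℂ ({id} : Set (ℂ → ℂ)) := by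
  rw [Algebra.adjoin_singleton_eq_range_aeval]
  rintro ⟨P, hP⟩
  have hev : ∀ a : ℂ, P.eval a = Complex.exp a := by
    intro a
    have hP' : (Polynomial.aeval (id : ℂ → ℂ)) P = Complex.exp := hP
    have := Polynomial.aeval_algHom_apply (Pi.evalAlgHom ℂ (fun _ => ℂ) a) (id : ℂ → ℂ) P
    simp only [Pi.evalAlgHom_apply, id_eq] at this
    rw [hP'] at this
    rw [← this]; rw [Polynomial.coe_aeval_eq_eval]
  have hdeg : P.natDegree = 0 := by
    by_contra h
    obtain ⟨a, ha⟩ := Complex.exists_root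
      (Polynomial.natDegree_pos_iff_degree_pos.1 (Nat.pos_of_ne_zero h))
    exact Complex.exp_ne_zero a (by rw [← hev a]; exact ha)
  have hc : P = Polynomial.C (P.coeff 0) := Polynomial.eq_C_of_natDegree_eq_zero hdeg
  have h1 := hev 0
  have h2 := hev (Real.pi * Complex.I)
  rw [hc] at h1 h2
  simp [Complex.exp_zero] at h1
  rw [Complex.exp_pi_mul_I] at h2
  simp at h2
  rw [h1] at h2
  norm_num at h2


/-- the function `(f, a) ↦ exp a` on `W`, which equals the right translate
`(exp, 0) · X_0 − X_0`, does not lie in the polynomial subring `ℂ[{X_c}, Y]` of functions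
on `W`; hence right translation by `(exp, 0)` does not preserve this ring. -/
theorem stmt_14 :
    ((fun p : WSet => Xc 0 (wmul p (Complex.exp, 0)) - Xc 0 p) = fun p : WSet => Complex.exp p.2) ∧
    (fun p : WSet => Complex.exp p.2) ∉
      Algebra.adjoin ℂ ({Yc} ∪ Set.range Xc : Set (WSet → ℂ)) ∧
    ¬ (∀ φ ∈ Algebra.adjoin ℂ ({Yc} ∪ Set.range Xc : Set (WSet → ℂ)),
        (fun p : WSet => φ (wmul p (Complex.exp, 0))) ∈
          Algebra.adjoin ℂ ({Yc} ∪ Set.range Xc : Set (WSet → ℂ))) := by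
  have h1 : (fun p : WSet => Xc 0 (wmul p (Complex.exp, 0)) - Xc 0 p)
      = fun p : WSet => Complex.exp p.2 := by
    funext p
    simp [Xc, wmul]
  have key : (fun p : WSet => Complex.exp p.2) ∉
      Algebra.adjoin ℂ ({Yc} ∪ Set.range Xc : Set (WSet → ℂ)) := by
    intro hmem
    have hmap : restr (fun p : WSet => Complex.exp p.2) ∈
        (Algebra.adjoin ℂ ({Yc} ∪ Set.range Xc : Set (WSet → ℂ))).map restr :=
      Subalgebra.mem_map.2 ⟨_, hmem, rfl⟩
    rw [AlgHom.map_adjoin] at hmap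
    have hsub : restr '' ({Yc} ∪ Set.range Xc) ⊆
        (Algebra.adjoin ℂ ({id} : Set (ℂ → ℂ)) : Set (ℂ → ℂ)) := by
      rintro g ⟨φ, hφ, rfl⟩
      rcases hφ with h | ⟨c, rfl⟩
      · rw [Set.mem_singleton_iff] at h; subst h
        exact Algebra.subset_adjoin rfl
      · have : restr (Xc c) = 0 := by funext a; simp [restr, Xc]; rfl
        rw [this]; exact Subalgebra.zero_mem _
    have hle := Algebra.adjoin_le hsub hmap
    have : restr (fun p : WSet => Complex.exp p.2) = Complex.exp := by
      funext a; rfl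
    rw [this] at hle
    exact exp_not_poly hle
  refine ⟨h1, key, fun H => ?_⟩
  have hX0 : Xc 0 ∈ Algebra.adjoin ℂ ({Yc} ∪ Set.range Xc : Set (WSet → ℂ)) :=
    Algebra.subset_adjoin (Or.inr ⟨0, rfl⟩)
  have h2 := H (Xc 0) hX0
  have h3 : (fun p : WSet => Xc 0 (wmul p (Complex.exp, 0)) - Xc 0 p) ∈
      Algebra.adjoin ℂ ({Yc} ∪ Set.range Xc : Set (WSet → ℂ)) :=
    Subalgebra.sub_mem _ h2 hX0
  rw [h1] at h3
  exact key h3
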